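/- Let {X_t} be a sequence of Bernoulli random variables adapted to a filtration, with P(X_t = 1 | F_t) = P_t where P_t is F_t-measurable. Then with probability at least 1 - δ, simultaneously for all t ≤ T: ∑_{k=1}^t X_k ≥ (1/2)·∑_{k=1}^t P_k - log(1/δ). -/

import Mathlib

open MeasureTheory ProbabilityTheory

section Aux

/-- Ville's maximal inequality for nonnegative supermartingales over a finite horizon. -/
lemma ville_aux {Ω : Type*} {m0 : MeasurableSpace Ω} {μ : Measure Ω} [IsProbabilityMeasure μ]
    {𝒢 : Filtration ℕ m0} {f : ℕ → Ω → ℝ}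
    (hsup : Supermartingale f 𝒢 μ) (hnonneg : ∀ i ω, 0 ≤ f i ω) {ε : ℝ} (hε : 0 < ε) (n : ℕ) :
    ENNReal.ofReal ε * μ {ω | ∃ k ≤ n, ε ≤ f k ω} ≤ ENNReal.ofReal (∫ ω, f 0 ω ∂μ) := by
  classical
  set A : Set Ω := {ω | ∃ k ≤ n, ε ≤ f k ω} with hA
  have hAmeas : MeasurableSet A := by
    have hAeq : A = ⋃ k ∈ Set.Iic n, {ω | ε ≤ f k ω} := by
      ext ω; simp [hA]
    rw [hAeq]
    exact MeasurableSet.biUnion (Set.to_countable _) fun k _ =>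
      measurableSet_le measurable_const ((hsup.stronglyMeasurable k).measurable.le (𝒢.le k))
  set τ : Ω → ℕ∞ := fun ω => ((hittingBtwn f (Set.Ici ε) 0 n ω : ℕ) : ℕ∞) with hτdef
  have hτ : IsStoppingTime 𝒢 τ := Adapted.isStoppingTime_hittingBtwn hsup.stronglyAdapted.adapted measurableSet_Ici
  have hτle : ∀ ω, τ ω ≤ n := fun ω => WithTop.coe_le_coe.mpr (hittingBtwn_le ω)
  have hint : Integrable (stoppedValue f τ) μ :=
    integrable_stoppedValue ℕ hτ hsup.integrable hτle
  have h1 : ∀ ω ∈ A, ε ≤ stoppedValue f τ ω := by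
    intro ω hω
    obtain ⟨k, hk, hεk⟩ := hω
    exact stoppedValue_hittingBtwn_mem ⟨k, ⟨Nat.zero_le _, hk⟩, hεk⟩
  have h2 : ε * (μ A).toReal ≤ ∫ ω in A, stoppedValue f τ ω ∂μ :=
    by rw [mul_comm]; exact setIntegral_ge_of_const_le hAmeas (measure_ne_top μ A) h1 hint.integrableOn
  have h3 : ∫ ω in A, stoppedValue f τ ω ∂μ ≤ ∫ ω, stoppedValue f τ ω ∂μ :=
    setIntegral_le_integral hint (Filter.Eventually.of_forall fun ω => hnonneg _ ω)
  have h4 : ∫ ω, stoppedValue f τ ω ∂μ ≤ ∫ ω, f 0 ω ∂μ := by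
    have h := hsup.neg.expected_stoppedValue_mono (isStoppingTime_const 𝒢 0) hτ
      (fun ω => zero_le) hτle
    rw [stoppedValue_const] at h
    have e1 : (μ[(-f) 0]) = -∫ ω, f 0 ω ∂μ := by
      simp only [Pi.neg_apply]
      exact integral_neg _
    have e2 : (μ[stoppedValue (-f) τ]) = -∫ ω, stoppedValue f τ ω ∂μ := by
      have : stoppedValue (-f) τ = fun ω => -(stoppedValue f τ ω) := by
        funext ω; simp [stoppedValue]
      rw [this]
      exact integral_neg _
    rw [e1, e2] at h
    linarith
  calc ENNReal.ofReal ε * μ A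
      = ENNReal.ofReal (ε * (μ A).toReal) := by
        rw [ENNReal.ofReal_mul hε.le, ENNReal.ofReal_toReal (measure_ne_top μ A)]
    _ ≤ ENNReal.ofReal (∫ ω, f 0 ω ∂μ) :=
        ENNReal.ofReal_le_ofReal (h2.trans (h3.trans h4))

end Aux

/-- Lemma F.4 of Dann et al. (2017): for a sequence of Bernoulli random variables `X t`
adapted to a filtration `F`, with `P(X t = 1 | F t) = Pt t` (`Pt t` being
`F t`-measurable and `X t` being `F (t+1)`-measurable), with probability at least
`1 - δ`, simultaneously for all `t ≤ T`,
`∑_{k<t} X k ≥ (1/2) ∑_{k<t} Pt k - log(1/δ)`. -/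
theorem adapted_bernoulli_lower_bound
    {Ω : Type*} [m : MeasurableSpace Ω] (P : Measure Ω) [IsProbabilityMeasure P]
    (F : Filtration ℕ m) (T : ℕ)
    (X : ℕ → Ω → ℝ) (Pt : ℕ → Ω → ℝ)
    (h01 : ∀ t ω, X t ω = 0 ∨ X t ω = 1)
    (hX : ∀ t, StronglyMeasurable[F (t + 1)] (X t))
    (hPt : ∀ t, StronglyMeasurable[F t] (Pt t))
    (hcond : ∀ t, P[X t | F t] =ᵐ[P] Pt t)
    (δ : ℝ) (hδ : δ ∈ Set.Ioo (0 : ℝ) 1) :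
    P {ω | ∀ t ≤ T, (1 / 2) * ∑ k ∈ Finset.range t, Pt k ω - Real.log (1 / δ)
        ≤ ∑ k ∈ Finset.range t, X k ω}
      ≥ ENNReal.ofReal (1 - δ) := by
  classical
  obtain ⟨hδ0, hδ1⟩ := hδ
  -- basic facts
  have hX0 : ∀ t ω, 0 ≤ X t ω := fun t ω => by rcases h01 t ω with h | h <;> simp [h]
  have hX1 : ∀ t ω, X t ω ≤ 1 := fun t ω => by rcases h01 t ω with h | h <;> simp [h]
  have hXm : ∀ t, StronglyMeasurable (X t) := fun t => (hX t).mono (F.le _)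
  have hPm : ∀ t, StronglyMeasurable (Pt t) := fun t => (hPt t).mono (F.le _)
  have hXint : ∀ t, Integrable (X t) P := fun t =>
    Integrable.mono' (integrable_const 1) (hXm t).aestronglyMeasurable
      (Filter.Eventually.of_forall fun ω => by
        rw [Real.norm_eq_abs, abs_of_nonneg (hX0 t ω)]; exact hX1 t ω)
  -- Pt ∈ [0,1] a.e.
  have hP0 : ∀ t, ∀ᵐ ω ∂P, 0 ≤ Pt t ω := by
    intro t
    filter_upwards [hcond t,
      condExp_nonneg (μ := P) (m := F t) (f := X t)
        (Filter.Eventually.of_forall fun ω => hX0 t ω)] with ω h1 h2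
    rw [← h1]; exact h2
  have hP1 : ∀ t, ∀ᵐ ω ∂P, Pt t ω ≤ 1 := by
    intro t
    have hle : P[X t|F t] ≤ᵐ[P] P[(fun _ => (1:ℝ))|F t] :=
      condExp_mono (hXint t) (integrable_const 1)
        (Filter.Eventually.of_forall fun ω => hX1 t ω)
    rw [condExp_const (F.le t)] at hle
    filter_upwards [hcond t, hle] with ω h1 h2
    rw [← h1]; exact h2
  -- the constant c
  set c : ℝ := 1 - Real.exp (-1) with hcdef
  have hc2 : (1:ℝ)/2 ≤ c := by
    have h2e : (2:ℝ) ≤ Real.exp 1 := by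
      have := Real.add_one_le_exp (1:ℝ); linarith
    have hinv : Real.exp (-1) ≤ 1/2 := by
      rw [Real.exp_neg]
      calc (Real.exp 1)⁻¹ ≤ (2:ℝ)⁻¹ := by
            apply inv_anti₀ (by norm_num) h2e
        _ = 1/2 := by norm_num
    simp only [hcdef]; linarith
  -- the supermartingale
  set M : ℕ → Ω → ℝ := fun t ω =>
    Real.exp ((1/2) * ∑ k ∈ Finset.range t, Pt k ω - ∑ k ∈ Finset.range t, X k ω) with hMdef
  have hMpos : ∀ t ω, 0 < M t ω := fun t ω => Real.exp_pos _
  have hMadp : StronglyAdapted F M := by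
    intro t
    have m1 : Measurable[F t] fun ω => ∑ k ∈ Finset.range t, Pt k ω :=
      Finset.measurable_sum _ fun k hk =>
        ((hPt k).mono (F.mono (Finset.mem_range.mp hk).le)).measurable
    have m2 : Measurable[F t] fun ω => ∑ k ∈ Finset.range t, X k ω :=
      Finset.measurable_sum _ fun k hk =>
        ((hX k).mono (F.mono (Finset.mem_range.mp hk))).measurable
    exact (((m1.const_mul _).sub m2).exp).stronglyMeasurable
  have hPle1 : ∀ᵐ ω ∂P, ∀ k, Pt k ω ≤ 1 := ae_all_iff.mpr hP1
  have hMbdd : ∀ t, ∀ᵐ ω ∂P, M t ω ≤ Real.exp ((t:ℝ)/2) := by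
    intro t
    filter_upwards [hPle1] with ω hω
    apply Real.exp_le_exp.mpr
    have hs1 : ∑ k ∈ Finset.range t, Pt k ω ≤ (t:ℝ) := by
      calc ∑ k ∈ Finset.range t, Pt k ω ≤ ∑ _k ∈ Finset.range t, (1:ℝ) :=
            Finset.sum_le_sum fun k _ => hω k
        _ = t := by simp
    have hs2 : 0 ≤ ∑ k ∈ Finset.range t, X k ω := Finset.sum_nonneg fun k _ => hX0 k ω
    linarith
  have hMint : ∀ t, Integrable (M t) P := fun t =>
    Integrable.mono' (integrable_const (Real.exp ((t:ℝ)/2)))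
      ((hMadp t).mono (F.le t)).aestronglyMeasurable
      (by filter_upwards [hMbdd t] with ω h
          rw [Real.norm_eq_abs, abs_of_pos (hMpos t ω)]; exact h)
  -- the supermartingale step
  have hstep : ∀ t, P[M (t+1)|F t] ≤ᵐ[P] M t := by
    intro t
    set g : Ω → ℝ := fun ω => M t ω * Real.exp ((1/2) * Pt t ω) with hgdef
    have hgmeas : StronglyMeasurable[F t] g :=
      (hMadp t).mul ((((hPt t).measurable.const_mul _).exp).stronglyMeasurable)
    have hMsucc : M (t+1) = fun ω => g ω * (1 - c * X t ω) := by
      funext ω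
      have key : Real.exp (-(X t ω)) = 1 - c * X t ω := by
        rcases h01 t ω with h | h <;> simp [h, hcdef]
      calc M (t+1) ω
          = g ω * Real.exp (-(X t ω)) := by
            simp only [hMdef, hgdef]
            rw [← Real.exp_add, ← Real.exp_add]
            congr 1
            rw [Finset.sum_range_succ, Finset.sum_range_succ]
            ring
        _ = g ω * (1 - c * X t ω) := by rw [key]
    have hint2 : Integrable (fun ω => 1 - c * X t ω) P :=
      (integrable_const (1:ℝ)).sub ((hXint t).const_mul c)
    have hint1 : Integrable (g * fun ω => 1 - c * X t ω) P := by
      have : (g * fun ω => 1 - c * X t ω) = M (t+1) := by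
        rw [hMsucc]; rfl
      rw [this]; exact hMint (t+1)
    have hpull : P[g * (fun ω => 1 - c * X t ω)|F t]
        =ᵐ[P] g * P[fun ω => 1 - c * X t ω|F t] :=
      condExp_mul_of_stronglyMeasurable_left hgmeas hint1 hint2
    have hcexp : P[fun ω => 1 - c * X t ω|F t] =ᵐ[P] fun ω => 1 - c * Pt t ω := by
      have hfun : (fun ω => 1 - c * X t ω) = (fun _ => (1:ℝ)) - c • (X t) := by
        funext ω; simp [smul_eq_mul]
      have hsub := condExp_sub (μ := P) (m := F t)
        (integrable_const (1:ℝ)) (Integrable.smul c (hXint t))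
      have hsmul := condExp_smul (μ := P) (m := F t) c (X t)
      rw [hfun]
      refine hsub.trans ?_
      rw [condExp_const (F.le t)]
      filter_upwards [hsmul, hcond t] with ω h1 h2
      simp only [Pi.sub_apply, Pi.smul_apply, smul_eq_mul] at h1 ⊢
      rw [h1, h2]
    have heq : P[M (t+1)|F t] =ᵐ[P] fun ω => g ω * (1 - c * Pt t ω) := by
      rw [hMsucc]
      have : (fun ω => g ω * (1 - c * X t ω)) = g * fun ω => 1 - c * X t ω := rfl
      rw [this]
      refine hpull.trans ?_
      filter_upwards [hcexp] with ω h1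
      simp only [Pi.mul_apply]
      rw [h1]
    refine heq.trans_le ?_
    filter_upwards [hP0 t, hP1 t] with ω h0 h1
    have hexp : Real.exp ((1/2) * Pt t ω) * (1 - c * Pt t ω) ≤ 1 := by
      have hch : 1 - c * Pt t ω ≤ Real.exp (-((1/2) * Pt t ω)) := by
        have h5 : 1 - c * Pt t ω ≤ 1 - (1/2) * Pt t ω := by nlinarith
        refine h5.trans ?_
        have := Real.add_one_le_exp (-((1/2) * Pt t ω))
        linarith
      calc Real.exp ((1/2) * Pt t ω) * (1 - c * Pt t ω)
          ≤ Real.exp ((1/2) * Pt t ω) * Real.exp (-((1/2) * Pt t ω)) :=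
            mul_le_mul_of_nonneg_left hch (Real.exp_pos _).le
        _ = 1 := by rw [← Real.exp_add, add_neg_cancel, Real.exp_zero]
    calc g ω * (1 - c * Pt t ω)
        = M t ω * (Real.exp ((1/2) * Pt t ω) * (1 - c * Pt t ω)) := by
          simp only [hgdef]; ring
      _ ≤ M t ω * 1 := mul_le_mul_of_nonneg_left hexp (hMpos t ω).le
      _ = M t ω := mul_one _
  have hMsup : Supermartingale M F P := supermartingale_nat hMadp hMint hstep
  -- apply Ville's inequality
  have hεpos : (0:ℝ) < 1/δ := by positivity
  have hv := ville_aux hMsup (fun i ω => (hMpos i ω).le) hεpos T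
  have hM0 : ∫ ω, M 0 ω ∂P = 1 := by
    simp [hMdef]
  rw [hM0, ENNReal.ofReal_one] at hv
  set A : Set Ω := {ω | ∃ k ≤ T, 1/δ ≤ M k ω} with hAdef
  have hPA : P A ≤ ENNReal.ofReal δ := by
    have hδinv : ENNReal.ofReal (1/δ) = (ENNReal.ofReal δ)⁻¹ := by
      rw [one_div, ENNReal.ofReal_inv_of_pos hδ0]
    calc P A = ENNReal.ofReal δ * (ENNReal.ofReal (1/δ) * P A) := by
          rw [← mul_assoc, hδinv,
            ENNReal.mul_inv_cancel (by simpa using hδ0) ENNReal.ofReal_ne_top, one_mul]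
      _ ≤ ENNReal.ofReal δ * 1 := by
          exact mul_le_mul_right hv _
      _ = ENNReal.ofReal δ := mul_one _
  set G : Set Ω := {ω | ∀ t ≤ T, (1 / 2) * ∑ k ∈ Finset.range t, Pt k ω - Real.log (1 / δ)
      ≤ ∑ k ∈ Finset.range t, X k ω} with hGdef
  have hGmeas : MeasurableSet G := by
    have hGeq : G = ⋂ t ∈ Set.Iic T, {ω | (1 / 2) * ∑ k ∈ Finset.range t, Pt k ω
        - Real.log (1 / δ) ≤ ∑ k ∈ Finset.range t, X k ω} := by
      ext ω; simp [hGdef]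
    rw [hGeq]
    refine MeasurableSet.biInter (Set.to_countable _) fun t _ => ?_
    have m1 : Measurable fun ω => ∑ k ∈ Finset.range t, Pt k ω :=
      Finset.measurable_sum _ fun k _ => (hPm k).measurable
    have m2 : Measurable fun ω => ∑ k ∈ Finset.range t, X k ω :=
      Finset.measurable_sum _ fun k _ => (hXm k).measurable
    exact measurableSet_le ((m1.const_mul _).sub measurable_const) m2
  have hsubset : Gᶜ ⊆ A := by
    intro ω hω
    simp only [hGdef, Set.mem_compl_iff, Set.mem_setOf_eq, not_forall] at hω
    obtain ⟨t, ht, hlt⟩ := hω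
    push_neg at hlt
    refine ⟨t, ht, ?_⟩
    have hlog : Real.log (1/δ) < (1/2) * ∑ k ∈ Finset.range t, Pt k ω
        - ∑ k ∈ Finset.range t, X k ω := by linarith
    have : Real.exp (Real.log (1/δ)) < M t ω := by
      simp only [hMdef]
      exact Real.exp_lt_exp.mpr hlog
    rw [Real.exp_log hεpos] at this
    exact this.le
  have hGc : P Gᶜ ≤ ENNReal.ofReal δ := le_trans (measure_mono hsubset) hPA
  have hPG : P G = 1 - P Gᶜ := by
    have h := measure_compl hGmeas.compl (measure_ne_top P Gᶜ)
    rw [compl_compl] at h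
    simpa [measure_univ] using h
  show P G ≥ ENNReal.ofReal (1 - δ)
  rw [hPG]
  calc ENNReal.ofReal (1 - δ) = 1 - ENNReal.ofReal δ := by
        rw [ENNReal.ofReal_sub _ hδ0.le, ENNReal.ofReal_one]
    _ ≤ 1 - P Gᶜ := tsub_le_tsub_left hGc 1
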